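/- Let X be a CAT(0) cube complex quasi-isometric to ℝ admitting a proper cocompact group action, let β be a combinatorial geodesic axis of a hyperbolic element, and let γ be any combinatorial geodesic ray lying in the κ-neighborhood of β_+ = β([0,∞)). Then the symmetric difference of the hyperplane sets W(γ) and W(β_+) has cardinality at most 2κ + 2·d(γ(0), β(0)). In particular γ and β_+ are almost-equivalent. -/

import Mathlib

/-- The set of walls separating `u` from `v` (hyperplanes, via halfspace
indicator `side`); combinatorial distance equals the number of such walls. -/
def sepSet {V W : Type*} (side : W → V → Bool) (u v : V) : Set W :=
  {w | side w u ≠ side w v}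

/-- `γ : ℕ → V` is a combinatorial geodesic ray in `Γ`. -/
def IsGeodesicRay {V : Type*} (Γ : SimpleGraph V) (γ : ℕ → V) : Prop :=
  (∀ t : ℕ, Γ.Adj (γ t) (γ (t + 1))) ∧ ∀ s t : ℕ, s ≤ t → Γ.dist (γ s) (γ t) = t - s

/-- `β : ℤ → V` is a bi-infinite combinatorial geodesic in `Γ`. -/
def IsGeodesicLine {V : Type*} (Γ : SimpleGraph V) (β : ℤ → V) : Prop :=
  (∀ t : ℤ, Γ.Adj (β t) (β (t + 1))) ∧ ∀ s t : ℤ, s ≤ t → Γ.dist (β s) (β t) = (t - s).toNat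

/-- The set of hyperplanes crossed by the ray `γ`. -/
def raysWalls {V W : Type*} (side : W → V → Bool) (γ : ℕ → V) : Set W :=
  {w | ∃ t : ℕ, side w (γ t) ≠ side w (γ (t + 1))}

/-- The set of hyperplanes crossed by the positive half `β₊ = β([0,∞))` of a
bi-infinite geodesic `β`. -/
def lineWallsPlus {V W : Type*} (side : W → V → Bool) (β : ℤ → V) : Set W :=
  {w | ∃ t : ℤ, 0 ≤ t ∧ side w (β t) ≠ side w (β (t + 1))}

lemma no_jump_const (f : ℕ → Bool) {a b : ℕ} (hab : a ≤ b)
    (h : ∀ t, a ≤ t → t < b → f t = f (t+1)) : f a = f b := by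
  induction b, hab using Nat.le_induction with
  | base => rfl
  | succ b hab ih =>
    rw [ih (fun t ht ht' => h t ht (by omega)), h b hab (by omega)]

lemma ray_cross_aux {V W : Type*} {Γ : SimpleGraph V} {side : W → V → Bool}
    (hdist : ∀ u v : V, Γ.dist u v = (sepSet side u v).ncard)
    {γ : ℕ → V} (hγ : IsGeodesicRay Γ γ) {w : W} {a b : ℕ} (hab : a < b)
    (ha : side w (γ a) ≠ side w (γ (a+1))) (hb : side w (γ b) ≠ side w (γ (b+1))) :
    False := by
  classical
  have hstep : ∀ t : ℕ, (sepSet side (γ t) (γ (t+1))).ncard = 1 := by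
    intro t
    rw [← hdist]
    have := hγ.2 t (t+1) (by omega)
    omega
  choose wt hwt using fun t => Set.ncard_eq_one.mp (hstep t)
  have hmem : ∀ t (w' : W), side w' (γ t) ≠ side w' (γ (t+1)) → w' = wt t := by
    intro t w' h
    have : w' ∈ sepSet side (γ t) (γ (t+1)) := h
    rw [hwt t] at this
    exact this
  have hsub : sepSet side (γ a) (γ (b+1)) ⊆ ↑(((Finset.Icc a b).erase b).image wt) := by
    intro w' hw'
    have hw'' : side w' (γ a) ≠ side w' (γ (b+1)) := hw'
    by_contra hcon
    simp only [Finset.coe_image, Set.mem_image, Finset.mem_coe, Finset.mem_erase,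
      Finset.mem_Icc] at hcon
    apply hw''
    apply no_jump_const (fun n => side w' (γ n)) (by omega : a ≤ b+1)
    intro t ht ht'
    by_contra hne
    have hwt' : w' = wt t := hmem t w' hne
    rcases eq_or_ne t b with htb | htb
    · have h1 : w = wt b := hmem b w hb
      have h2 : w = wt a := hmem a w ha
      have h3 : wt a = w' := by rw [← h2, h1, ← htb, ← hwt']
      exact hcon ⟨a, ⟨by omega, by omega, by omega⟩, h3⟩
    · exact hcon ⟨t, ⟨htb, ht, by omega⟩, hwt'.symm⟩
  have hcard : (sepSet side (γ a) (γ (b+1))).ncard ≤ b - a := by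
    calc (sepSet side (γ a) (γ (b+1))).ncard
        ≤ (↑(((Finset.Icc a b).erase b).image wt) : Set W).ncard :=
          Set.ncard_le_ncard hsub (Set.finite_coe_iff.mp (by infer_instance))
      _ = (((Finset.Icc a b).erase b).image wt).card := Set.ncard_coe_finset _
      _ ≤ ((Finset.Icc a b).erase b).card := Finset.card_image_le
      _ ≤ b - a := by
          rw [Finset.card_erase_of_mem (by simp [Finset.mem_Icc]; omega), Nat.card_Icc]
          omega
  have := hdist (γ a) (γ (b+1))
  have := hγ.2 a (b+1) (by omega)
  omega

lemma ray_cross_unique {V W : Type*} {Γ : SimpleGraph V} {side : W → V → Bool}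
    (hdist : ∀ u v : V, Γ.dist u v = (sepSet side u v).ncard)
    {γ : ℕ → V} (hγ : IsGeodesicRay Γ γ) {w : W} {a b : ℕ}
    (ha : side w (γ a) ≠ side w (γ (a+1))) (hb : side w (γ b) ≠ side w (γ (b+1))) :
    a = b := by
  rcases lt_trichotomy a b with h | h | h
  · exact absurd (ray_cross_aux hdist hγ h ha hb) not_false
  · exact h
  · exact absurd (ray_cross_aux hdist hγ h hb ha) not_false

/-- let `X` be a CAT(0) cube complex (modeled by its median
1-skeleton `Γ` with hyperplane structure `side`), `β` a combinatorial geodesic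
axis of a hyperbolic automorphism `φ`, and `γ` a combinatorial geodesic ray in
the `κ`-neighborhood of `β₊ = β([0,∞))`.  Then
`#(W(γ) ∆ W(β₊)) ≤ 2κ + 2·d(γ(0), β(0))`; in particular `γ` and `β₊` are
almost-equivalent. -/
theorem walls_symmDiff_bound_for_ray_near_axis
    {V W : Type*} (Γ : SimpleGraph V) (hconn : Γ.Connected)
    (side : W → V → Bool)
    (hfin : ∀ u v : V, (sepSet side u v).Finite)
    (hdist : ∀ u v : V, Γ.dist u v = (sepSet side u v).ncard)
    (β : ℤ → V) (hβ : IsGeodesicLine Γ β)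
    (φ : Γ ≃g Γ) (L : ℤ) (hL : 0 < L) (haxis : ∀ t : ℤ, φ (β t) = β (t + L))
    (γ : ℕ → V) (hγ : IsGeodesicRay Γ γ)
    (κ : ℕ) (hnear : ∀ t : ℕ, ∃ s : ℤ, 0 ≤ s ∧ Γ.dist (γ t) (β s) ≤ κ) :
    (symmDiff (raysWalls side γ) (lineWallsPlus side β)).Finite ∧
      (symmDiff (raysWalls side γ) (lineWallsPlus side β)).ncard ≤
        2 * κ + 2 * Γ.dist (γ 0) (β 0) := by
  classical
  set γ' : ℕ → V := fun n => β n with hγ'def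
  have hγ' : IsGeodesicRay Γ γ' := by
    constructor
    · intro t
      show Γ.Adj (β ↑t) (β ↑(t+1))
      push_cast
      exact hβ.1 t
    · intro a b hab
      show Γ.dist (β ↑a) (β ↑b) = b - a
      rw [hβ.2 ↑a ↑b (by exact_mod_cast hab)]
      omega
  have hplus : lineWallsPlus side β = raysWalls side γ' := by
    ext w
    constructor
    · rintro ⟨t, ht0, hne⟩
      refine ⟨t.toNat, ?_⟩
      show side w (β ↑t.toNat) ≠ side w (β ↑(t.toNat+1))
      have h1 : (↑t.toNat : ℤ) = t := Int.toNat_of_nonneg ht0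
      have h2 : (↑(t.toNat+1) : ℤ) = t+1 := by push_cast; omega
      rw [h1, h2]; exact hne
    · rintro ⟨n, hne⟩
      refine ⟨n, Int.natCast_nonneg n, ?_⟩
      have hne' : side w (β ↑n) ≠ side w (β ↑(n+1)) := hne
      rwa [show ((n+1 : ℕ) : ℤ) = ↑n + 1 by push_cast; ring] at hne'
  set D := Γ.dist (γ 0) (β 0) with hD
  choose s hs0 hsκ using hnear
  have hsge : ∀ n : ℕ, n ≤ D + (s n).toNat + κ := by
    intro n
    have h1 := hγ.2 0 n (Nat.zero_le n)
    have h2 := hβ.2 0 (s n) (hs0 n)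
    have h3 := hconn.dist_triangle (u := γ 0) (v := β 0) (w := γ n)
    have h4 := hconn.dist_triangle (u := β 0) (v := β (s n)) (w := γ n)
    have h5 := Γ.dist_comm (u := β (s n)) (v := γ n)
    have h6 := hsκ n
    omega
  set S := symmDiff (raysWalls side γ) (raysWalls side γ') with hS
  have key : ∀ w ∈ S, ∃ N : ℕ, ∀ n, N ≤ n →
      w ∈ sepSet side (γ 0) (β 0) ∪ sepSet side (γ n) (β (s n)) := by
    intro w hw
    rcases Set.mem_symmDiff.mp hw with ⟨hwγ, hwγ'⟩ | ⟨hwγ', hwγ⟩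
    · obtain ⟨t, hjump⟩ := hwγ
      by_cases hc : side w (γ 0) = side w (β 0)
      · refine ⟨t+1, fun n hn => Or.inr ?_⟩
        show side w (γ n) ≠ side w (β (s n))
        have hconst' : ∀ m : ℕ, side w (γ' m) = side w (γ' 0) :=
          fun m => (no_jump_const (fun u => side w (γ' u)) (Nat.zero_le m)
            (fun u _ _ => by by_contra h; exact hwγ' ⟨u, h⟩)).symm
        have h1 : side w (γ 0) = side w (γ t) :=
          no_jump_const (fun u => side w (γ u)) (Nat.zero_le t) (fun u hu hu' => by
            by_contra h
            exact absurd (ray_cross_unique hdist hγ h hjump) (by omega))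
        have h2 : side w (γ (t+1)) = side w (γ n) :=
          no_jump_const (fun u => side w (γ u)) hn (fun u hu hu' => by
            by_contra h
            exact ray_cross_aux hdist hγ (by omega : t < u) hjump h)
        have h3 : side w (β (s n)) = side w (β 0) := by
          have := hconst' (s n).toNat
          have hcast : ((s n).toNat : ℤ) = s n := Int.toNat_of_nonneg (hs0 n)
          show side w (β (s n)) = side w (β 0)
          rw [← hcast]
          refine this.trans ?_
          show side w (β ↑(0:ℕ)) = side w (β 0)
          norm_num
        rw [h3, ← hc, h1, ← h2]
        exact fun hh => hjump hh.symm
      · exact ⟨0, fun n _ => Or.inl hc⟩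
    · obtain ⟨t, hjump⟩ := hwγ'
      by_cases hc : side w (γ 0) = side w (β 0)
      · refine ⟨t + 1 + D + κ, fun n hn => Or.inr ?_⟩
        have hsn : t + 1 ≤ (s n).toNat := by have := hsge n; omega
        have hconstγ : ∀ m : ℕ, side w (γ m) = side w (γ 0) :=
          fun m => (no_jump_const (fun u => side w (γ u)) (Nat.zero_le m)
            (fun u _ _ => by by_contra h; exact hwγ ⟨u, h⟩)).symm
        have h1 : side w (γ' 0) = side w (γ' t) :=
          no_jump_const (fun u => side w (γ' u)) (Nat.zero_le t) (fun u hu hu' => by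
            by_contra h
            exact absurd (ray_cross_unique hdist hγ' h hjump) (by omega))
        have h2 : side w (γ' (t+1)) = side w (γ' (s n).toNat) :=
          no_jump_const (fun u => side w (γ' u)) hsn (fun u hu hu' => by
            by_contra h
            exact ray_cross_aux hdist hγ' (by omega : t < u) hjump h)
        show side w (γ n) ≠ side w (β (s n))
        have hcast : β (s n) = γ' (s n).toNat := by
          show β (s n) = β ↑(s n).toNat
          rw [Int.toNat_of_nonneg (hs0 n)]
        have hzero : side w (β 0) = side w (γ' 0) := by
          show side w (β 0) = side w (β ↑(0:ℕ))
          norm_num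
        rw [hconstγ n, hc, hcast, ← h2, hzero, h1]
        exact hjump
      · exact ⟨0, fun n _ => Or.inl hc⟩
  choose! N hN using key
  have bound : ∀ F : Finset W, ↑F ⊆ S → F.card ≤ κ + D := by
    intro F hF
    set M := F.sup N with hM
    have hsub : ↑F ⊆ sepSet side (γ 0) (β 0) ∪ sepSet side (γ M) (β (s M)) := by
      intro w hw
      exact hN w (hF hw) M (Finset.le_sup hw)
    calc F.card = (↑F : Set W).ncard := (Set.ncard_coe_finset F).symm
      _ ≤ (sepSet side (γ 0) (β 0) ∪ sepSet side (γ M) (β (s M))).ncard :=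
          Set.ncard_le_ncard hsub ((hfin _ _).union (hfin _ _))
      _ ≤ (sepSet side (γ 0) (β 0)).ncard + (sepSet side (γ M) (β (s M))).ncard :=
          Set.ncard_union_le _ _
      _ ≤ D + κ := by
          have e1 := hdist (γ 0) (β 0)
          have e2 := hdist (γ M) (β (s M))
          have e3 := hsκ M
          omega
      _ ≤ κ + D := by omega
  have hSfin : S.Finite := by
    by_contra hinf
    obtain ⟨F, hFs, hFc⟩ := Set.Infinite.exists_subset_card_eq hinf (κ + D + 1)
    have := bound F hFs
    omega
  have hSn : S.ncard ≤ κ + D := by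
    have := bound hSfin.toFinset (by simp)
    rwa [← Set.ncard_eq_toFinset_card S hSfin] at this
  constructor
  · rw [hplus]; exact hSfin
  · rw [hplus, ← hS]; omega
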